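/- Let X and Y be n×n complex matrices. For every real λ, −Y/2 + e^{−λY/2} ( e^{−λX/2} Y e^{λX/2} + X/2 ) e^{λY/2} = Σ_{ℓ≥0} f_{1,ℓ} λ^ℓ, where the series converges absolutely, f_{1,0} = (X+Y)/2, and for ℓ ≥ 1, f_{1,ℓ} = ((−1)^ℓ/2^ℓ) ( (1/(2·ℓ!)) ad_Y^ℓ X + Σ_{j=0}^{ℓ} (1/(j!·(ℓ−j)!)) ad_Y^{ℓ−j} ad_X^j Y ). -/

import Mathlib

attribute [local instance] Matrix.linftyOpNormedAddCommGroup Matrix.linftyOpNormedRing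
  Matrix.linftyOpNormedAlgebra Matrix.linftyOpNormedSpace

/-- Iterated adjoint: `adPow A j B = ad_A^j B`, where `ad_A B = [A, B]`. -/
def adPow {m : ℕ} (A : Matrix (Fin m) (Fin m) ℂ) (j : ℕ) (B : Matrix (Fin m) (Fin m) ℂ) :
    Matrix (Fin m) (Fin m) ℂ :=
  (fun C => ⁅A, C⁆)^[j] B

set_option maxHeartbeats 4000000

section FOneAuxLemmas

open Finset NormedSpace

variable {m : ℕ}

lemma adPow_zero (A B : Matrix (Fin m) (Fin m) ℂ) : adPow A 0 B = B := rfl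

lemma adPow_succ (A : Matrix (Fin m) (Fin m) ℂ) (j : ℕ) (B : Matrix (Fin m) (Fin m) ℂ) :
    adPow A (j + 1) B = A * adPow A j B - adPow A j B * A := by
  simp only [adPow, Function.iterate_succ_apply', Ring.lie_def]

lemma adPow_smul_left (c : ℂ) (A : Matrix (Fin m) (Fin m) ℂ) (j : ℕ)
    (B : Matrix (Fin m) (Fin m) ℂ) : adPow (c • A) j B = c ^ j • adPow A j B := by
  induction j with
  | zero => simp [adPow_zero]
  | succ j ih =>
    simp only [adPow_succ, ih, smul_mul_assoc, mul_smul_comm, smul_smul, pow_succ',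
      smul_sub, mul_comm]

lemma adPow_smul_right (c : ℂ) (A : Matrix (Fin m) (Fin m) ℂ) (j : ℕ)
    (B : Matrix (Fin m) (Fin m) ℂ) : adPow A j (c • B) = c • adPow A j B := by
  induction j with
  | zero => simp [adPow_zero]
  | succ j ih => simp only [adPow_succ, ih, smul_mul_assoc, mul_smul_comm, smul_sub]

lemma norm_adPow_le (A B : Matrix (Fin m) (Fin m) ℂ) (j : ℕ) :
    ‖adPow A j B‖ ≤ (2 * ‖A‖) ^ j * ‖B‖ := by
  induction j with
  | zero => simp [adPow_zero]
  | succ j ih =>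
    rw [adPow_succ, pow_succ]
    have h1 := norm_sub_le (A * adPow A j B) (adPow A j B * A)
    have h2 := norm_mul_le A (adPow A j B)
    have h3 := norm_mul_le (adPow A j B) A
    have h4 := norm_nonneg A
    have h5 := norm_nonneg (adPow A j B)
    have h6 := norm_nonneg B
    have h7 : (0:ℝ) ≤ (2 * ‖A‖) ^ j := by positivity
    nlinarith

lemma adPow_expand (A B : Matrix (Fin m) (Fin m) ℂ) (j : ℕ) :
    adPow A j B = ∑ k ∈ range (j + 1), (j.choose k : ℂ) • (A ^ k * B * (-A) ^ (j - k)) := by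
  have hend : ∀ i, adPow A i B =
      ((LinearMap.mulLeft ℂ A - LinearMap.mulRight ℂ A) ^ i) B := by
    intro i
    induction i with
    | zero => simp [adPow_zero]
    | succ i ih =>
      rw [adPow_succ, ih, pow_succ', Module.End.mul_apply, LinearMap.sub_apply,
        LinearMap.mulLeft_apply, LinearMap.mulRight_apply]
  rw [hend]
  have hneg : -(LinearMap.mulRight ℂ A) =
      LinearMap.mulRight ℂ (-A : Matrix (Fin m) (Fin m) ℂ) := by
    refine LinearMap.ext fun x => ?_
    simp only [LinearMap.neg_apply, LinearMap.mulRight_apply, Matrix.mul_neg, Matrix.neg_mul]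
  have hc : Commute (LinearMap.mulLeft ℂ A) (-(LinearMap.mulRight ℂ A)) :=
    (LinearMap.commute_mulLeft_right (R := ℂ) A A).neg_right
  rw [sub_eq_add_neg, hc.add_pow, LinearMap.sum_apply]
  refine Finset.sum_congr rfl fun k hk => ?_
  rw [hneg]
  simp only [Module.End.mul_apply, LinearMap.pow_mulLeft, LinearMap.pow_mulRight,
    Module.End.natCast_apply, LinearMap.mulLeft_apply, LinearMap.mulRight_apply]
  rw [← Nat.cast_smul_eq_nsmul (R := ℂ)]
  simp [mul_assoc, smul_mul_assoc, mul_smul_comm]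

lemma conj_hasSum (A B : Matrix (Fin m) (Fin m) ℂ) :
    HasSum (fun j => ((j.factorial : ℂ))⁻¹ • adPow A j B)
      (exp A * B * exp (-A)) := by
  classical
  set f : ℕ → Matrix (Fin m) (Fin m) ℂ := fun k => (((k.factorial : ℂ))⁻¹ • A ^ k) * B with hfdef
  set g : ℕ → Matrix (Fin m) (Fin m) ℂ := fun k => ((k.factorial : ℂ))⁻¹ • (-A) ^ k with hgdef
  have hf : Summable fun k => ‖f k‖ := by
    refine Summable.of_nonneg_of_le (fun k => norm_nonneg _)
      (fun k => norm_mul_le _ _) ?_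
    exact (NormedSpace.norm_expSeries_summable' (𝕂 := ℂ) A).mul_right _
  have hg : Summable fun k => ‖g k‖ := NormedSpace.norm_expSeries_summable' (𝕂 := ℂ) (-A)
  have key := hasSum_sum_range_mul_of_summable_norm hf hg
  have hft : (∑' n, f n) = exp A * B :=
    ((NormedSpace.exp_series_hasSum_exp' (𝕂 := ℂ) A).mul_right B).tsum_eq
  have hgt : (∑' n, g n) = exp (-A) :=
    (NormedSpace.exp_series_hasSum_exp' (𝕂 := ℂ) (-A)).tsum_eq
  erw [hft, hgt] at key
  convert key using 2 with n
  case e'_3 => rfl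
  case e'_4 => rfl
  rw [adPow_expand, Finset.smul_sum]
  refine Finset.sum_congr rfl fun k hk => ?_
  have hkn : k ≤ n := Nat.lt_succ_iff.mp (Finset.mem_range.mp hk)
  have hfact : ((n.choose k : ℂ)) * (k.factorial : ℂ) * ((n - k).factorial : ℂ)
      = (n.factorial : ℂ) := by
    exact_mod_cast congrArg (Nat.cast : ℕ → ℂ) (Nat.choose_mul_factorial_mul_factorial hkn)
  have hk0 : (k.factorial : ℂ) ≠ 0 := Nat.cast_ne_zero.mpr k.factorial_ne_zero
  have hnk0 : ((n - k).factorial : ℂ) ≠ 0 := Nat.cast_ne_zero.mpr (n - k).factorial_ne_zero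
  have hn0 : (n.factorial : ℂ) ≠ 0 := Nat.cast_ne_zero.mpr n.factorial_ne_zero
  simp only [hfdef, hgdef]
  rw [smul_mul_assoc, smul_mul_assoc, mul_smul_comm, smul_smul, smul_smul]
  congr 1
  field_simp
  linear_combination hfact

lemma real_smul_eq (r : ℝ) (C : Matrix (Fin m) (Fin m) ℂ) : r • C = (r : ℂ) • C :=
  (algebraMap_smul ℂ r C).symm

lemma key_eq (X Y : Matrix (Fin m) (Fin m) ℂ) (l : ℝ) (f₁ : ℕ → Matrix (Fin m) (Fin m) ℂ)
    (hf₀ : f₁ 0 = (1 / 2 : ℂ) • (X + Y))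
    (hf : ∀ ℓ : ℕ, 1 ≤ ℓ →
      f₁ ℓ = ((-1 : ℝ) ^ ℓ / 2 ^ ℓ) •
        ((1 / (2 * (ℓ.factorial : ℝ))) • adPow Y ℓ X +
          ∑ j ∈ Finset.range (ℓ + 1),
            (1 / ((j.factorial : ℝ) * ((ℓ - j).factorial : ℝ))) •
              adPow Y (ℓ - j) (adPow X j Y))) (n : ℕ) :
    (if n = 0 then -((1 / 2 : ℂ) • Y) else 0) +
      (∑ p ∈ Finset.HasAntidiagonal.antidiagonal n,
        (((p.1.factorial : ℂ))⁻¹ * ((-(l / 2) : ℝ) : ℂ) ^ p.1 *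
          (((p.2.factorial : ℂ))⁻¹ * ((-(l / 2) : ℝ) : ℂ) ^ p.2)) •
            adPow Y p.2 (adPow X p.1 Y)) +
      (((n.factorial : ℂ))⁻¹ * ((-(l / 2) : ℝ) : ℂ) ^ n * (1 / 2)) • adPow Y n X
    = l ^ n • f₁ n := by
  set μ : ℂ := ((-(l / 2) : ℝ) : ℂ) with hμ
  match n with
  | 0 =>
    rw [hf₀]
    simp only [if_pos rfl, Finset.Nat.antidiagonal_zero, Finset.sum_singleton, adPow_zero,
      Nat.factorial_zero, Nat.cast_one, inv_one, pow_zero, mul_one, one_mul, one_smul,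
      pow_zero (l), if_true]
    module
  | (Nat.succ n) =>
    set N := n + 1 with hN
    have hN1 : 1 ≤ N := Nat.succ_le_succ (Nat.zero_le _)
    rw [hf N hN1, if_neg (Nat.succ_ne_zero n), zero_add,
      Finset.Nat.sum_antidiagonal_eq_sum_range_succ_mk]
    simp only [real_smul_eq, smul_add, smul_smul, Finset.smul_sum]
    rw [add_comm]
    congr 1
    · congr 1
      have h2 : ((N.factorial : ℂ)) ≠ 0 := Nat.cast_ne_zero.mpr N.factorial_ne_zero
      rw [hμ]
      simp only [hN, Nat.succ_eq_add_one] at h2 ⊢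
      push_cast
      field_simp
      rw [← mul_pow]; ring
    · refine Finset.sum_congr rfl fun k hk => ?_
      have hkN : k ≤ N := Nat.lt_succ_iff.mp (Finset.mem_range.mp hk)
      have hμN : μ ^ k * μ ^ (N - k) = μ ^ N := by
        rw [← pow_add, Nat.add_sub_cancel' hkN]
      congr 1
      have e1 : ((k.factorial : ℂ))⁻¹ * μ ^ k * (((N - k).factorial : ℂ))⁻¹ * μ ^ (N - k)
          = ((k.factorial : ℂ))⁻¹ * (((N - k).factorial : ℂ))⁻¹ * μ ^ N := by
        rw [← hμN]; ring
      have hk0 : ((k.factorial : ℂ)) ≠ 0 := Nat.cast_ne_zero.mpr k.factorial_ne_zero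
      have hnk0 : (((N - k).factorial : ℂ)) ≠ 0 := Nat.cast_ne_zero.mpr (N - k).factorial_ne_zero
      calc ((k.factorial : ℂ))⁻¹ * μ ^ k * ((((N - k).factorial : ℂ))⁻¹ * μ ^ (N - k))
          = ((k.factorial : ℂ))⁻¹ * (((N - k).factorial : ℂ))⁻¹ * μ ^ N := by
            rw [← e1]; ring
        _ = _ := by
            rw [hμ]
            simp only [hN, Nat.succ_eq_add_one]
            push_cast
            field_simp
            rw [← mul_pow]; ring

/-- The expansion `−Y/2 + e^{−λY/2}(e^{−λX/2} Y e^{λX/2} + X/2) e^{λY/2} = Σ_{ℓ≥0} f_{1,ℓ} λ^ℓ`,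
with the explicit coefficients `f_{1,ℓ}`; the series converges absolutely. -/
theorem F_one_series_expansion (m : ℕ) (X Y : Matrix (Fin m) (Fin m) ℂ)
    (f₁ : ℕ → Matrix (Fin m) (Fin m) ℂ)
    (hf₀ : f₁ 0 = (1 / 2 : ℂ) • (X + Y))
    (hf : ∀ ℓ : ℕ, 1 ≤ ℓ →
      f₁ ℓ = ((-1 : ℝ) ^ ℓ / 2 ^ ℓ) •
        ((1 / (2 * (ℓ.factorial : ℝ))) • adPow Y ℓ X +
          ∑ j ∈ Finset.range (ℓ + 1),
            (1 / ((j.factorial : ℝ) * ((ℓ - j).factorial : ℝ))) •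
              adPow Y (ℓ - j) (adPow X j Y))) :
    ∀ l : ℝ,
      Summable (fun ℓ : ℕ => ‖l ^ ℓ • f₁ ℓ‖) ∧
      HasSum (fun ℓ : ℕ => l ^ ℓ • f₁ ℓ)
        (-((1 / 2 : ℂ) • Y) +
          NormedSpace.exp ((-(l / 2)) • Y) *
            (NormedSpace.exp ((-(l / 2)) • X) * Y * NormedSpace.exp ((l / 2) • X) +
              (1 / 2 : ℂ) • X) *
            NormedSpace.exp ((l / 2) • Y)) := by
  intro l
  classical
  set μ : ℂ := ((-(l / 2) : ℝ) : ℂ) with hμ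
  have hPY : ((-(l / 2)) • Y) = μ • Y := real_smul_eq _ _
  have hPX : ((-(l / 2)) • X) = μ • X := real_smul_eq _ _
  have hQY : ((l / 2) • Y) = -(μ • Y) := by
    rw [real_smul_eq, ← neg_smul, hμ]; push_cast; ring_nf
  have hQX : ((l / 2) • X) = -(μ • X) := by
    rw [real_smul_eq, ← neg_smul, hμ]; push_cast; ring_nf
  set P := NormedSpace.exp (μ • Y) with hP
  set Q := NormedSpace.exp (-(μ • Y)) with hQ
  set Mid := NormedSpace.exp (μ • X) * Y * NormedSpace.exp (-(μ • X)) with hMid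
  set h : ℕ × ℕ → Matrix (Fin m) (Fin m) ℂ := fun p =>
    (((p.1.factorial : ℂ))⁻¹ * μ ^ p.1 * (((p.2.factorial : ℂ))⁻¹ * μ ^ p.2)) •
      adPow Y p.2 (adPow X p.1 Y) with hh
  set b : ℕ → Matrix (Fin m) (Fin m) ℂ := fun j =>
    (((j.factorial : ℂ))⁻¹ * μ ^ j) • adPow X j Y with hb_def
  -- inner conjugation
  have hb : HasSum b Mid := by
    have h1 := conj_hasSum (μ • X) Y
    simp only [adPow_smul_left, smul_smul] at h1
    exact h1
  -- fiberwise outer conjugation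
  have fib : ∀ j, HasSum (fun k => h (j, k)) (P * b j * Q) := by
    intro j
    have h1 := (conj_hasSum (μ • Y) (adPow X j Y)).const_smul
      (((j.factorial : ℂ))⁻¹ * μ ^ j)
    simp only [adPow_smul_left, smul_smul] at h1
    have e1 : (fun k => ((((j.factorial : ℂ))⁻¹ * μ ^ j) *
        (((k.factorial : ℂ))⁻¹ * μ ^ k)) • adPow Y k (adPow X j Y)) = fun k => h (j, k) := by
      funext k; simp [hh]
    rw [e1] at h1
    have e2 : (((j.factorial : ℂ))⁻¹ * μ ^ j) •
        (NormedSpace.exp (μ • Y) * adPow X j Y * NormedSpace.exp (-(μ • Y)))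
        = P * b j * Q := by
      rw [hb_def, hP, hQ]
      simp only [smul_mul_assoc, mul_smul_comm]
    rw [e2] at h1
    exact h1
  -- summability of the double family
  have hnorm : Summable (fun p : ℕ × ℕ => ‖h p‖) := by
    have hF : Summable (fun j : ℕ => (‖μ‖ * (2 * ‖X‖)) ^ j / j.factorial * ‖Y‖) :=
      (Real.summable_pow_div_factorial _).mul_right _
    have hG : Summable (fun k : ℕ => (‖μ‖ * (2 * ‖Y‖)) ^ k / k.factorial) :=
      Real.summable_pow_div_factorial _
    refine Summable.of_nonneg_of_le (fun _ => norm_nonneg _) (fun p => ?_)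
      (hF.mul_of_nonneg hG (fun j => by positivity) (fun k => by positivity))
    obtain ⟨j, k⟩ := p
    rw [hh]
    simp only [norm_smul]
    have h1 : ‖adPow Y k (adPow X j Y)‖ ≤ (2 * ‖Y‖) ^ k * ((2 * ‖X‖) ^ j * ‖Y‖) := by
      refine le_trans (norm_adPow_le _ _ _) ?_
      have := norm_adPow_le X Y j
      gcongr
    have hs : ‖(((j.factorial : ℂ))⁻¹ * μ ^ j * (((k.factorial : ℂ))⁻¹ * μ ^ k))‖
        = ‖μ‖ ^ j / j.factorial * (‖μ‖ ^ k / k.factorial) := by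
      simp [norm_mul, norm_pow, norm_inv, div_eq_mul_inv, Complex.norm_natCast]
      ring
    rw [hs]
    have expand : (‖μ‖ * (2 * ‖X‖)) ^ j / j.factorial * ‖Y‖ * ((‖μ‖ * (2 * ‖Y‖)) ^ k / k.factorial)
        = (‖μ‖ ^ j / j.factorial * (‖μ‖ ^ k / k.factorial)) *
          ((2 * ‖Y‖) ^ k * ((2 * ‖X‖) ^ j * ‖Y‖)) := by
      rw [mul_pow, mul_pow]; ring
    rw [expand]
    exact mul_le_mul_of_nonneg_left h1 (by positivity)
  have hsum : Summable h := hnorm.of_norm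
  have hfsum : HasSum (fun j => P * b j * Q) (P * Mid * Q) := (hb.mul_left P).mul_right Q
  have hhs : HasSum h (P * Mid * Q) := by
    have h1 := hsum.hasSum
    have h2 := h1.prod_fiberwise fib
    rwa [h2.unique hfsum] at h1
  -- regroup along antidiagonals
  have hd : HasSum (fun n => ∑ p ∈ Finset.HasAntidiagonal.antidiagonal n, h p) (P * Mid * Q) := by
    have he : HasSum (h ∘ (Finset.HasAntidiagonal.sigmaAntidiagonalEquivProd (A := ℕ))) (P * Mid * Q) :=
      (Equiv.hasSum_iff _).mpr hhs
    exact he.sigma fun n => Finset.hasSum (Finset.HasAntidiagonal.antidiagonal n) h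
  have hdn : Summable (fun n => ∑ p ∈ Finset.HasAntidiagonal.antidiagonal n, ‖h p‖) := by
    have he : HasSum ((fun p => ‖h p‖) ∘ (Finset.HasAntidiagonal.sigmaAntidiagonalEquivProd (A := ℕ)))
        (∑' p, ‖h p‖) := (Equiv.hasSum_iff _).mpr hnorm.hasSum
    exact (he.sigma fun n => Finset.hasSum (Finset.HasAntidiagonal.antidiagonal n) (fun p => ‖h p‖)).summable
  -- the X/2 part
  set Hf : ℕ → Matrix (Fin m) (Fin m) ℂ := fun n =>
    (((n.factorial : ℂ))⁻¹ * μ ^ n * (1 / 2)) • adPow Y n X with hHf_def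
  have hHf : HasSum Hf (P * ((1 / 2 : ℂ) • X) * Q) := by
    have e1 : Hf = fun n => (((n.factorial : ℂ))⁻¹) • adPow (μ • Y) n ((1 / 2 : ℂ) • X) := by
      funext n
      rw [hHf_def, adPow_smul_left, adPow_smul_right, smul_smul, smul_smul]
    rw [e1, hP, hQ]
    exact conj_hasSum _ _
  have hHfn : Summable fun n => ‖Hf n‖ := by
    refine Summable.of_nonneg_of_le (fun _ => norm_nonneg _) (fun n => ?_)
      ((Real.summable_pow_div_factorial (‖μ‖ * (2 * ‖Y‖))).mul_right (‖X‖ / 2))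
    rw [hHf_def]
    simp only [norm_smul]
    have hs : ‖(((n.factorial : ℂ))⁻¹ * μ ^ n * (1 / 2 : ℂ))‖ = ‖μ‖ ^ n / n.factorial * (1 / 2) := by
      simp [norm_mul, norm_pow, norm_inv, div_eq_mul_inv, Complex.norm_natCast]
      ring
    rw [hs]
    have h1 := norm_adPow_le Y X n
    have expand : (‖μ‖ * (2 * ‖Y‖)) ^ n / n.factorial * (‖X‖ / 2)
        = (‖μ‖ ^ n / n.factorial * (1 / 2)) * ((2 * ‖Y‖) ^ n * ‖X‖) := by
      rw [mul_pow]; ring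
    rw [expand]
    exact mul_le_mul_of_nonneg_left h1 (by positivity)
  -- the constant part
  have hI : HasSum (fun n : ℕ => if n = 0 then -((1 / 2 : ℂ) • Y) else 0)
      (-((1 / 2 : ℂ) • Y)) := hasSum_ite_eq 0 _
  have hIn : Summable (fun n : ℕ => ‖if n = 0 then -((1 / 2 : ℂ) • Y) else (0 : Matrix (Fin m) (Fin m) ℂ)‖) := by
    refine Summable.of_nonneg_of_le (fun _ => norm_nonneg _) (fun n => ?_)
      (hasSum_ite_eq 0 ‖-((1 / 2 : ℂ) • Y)‖).summable
    split_ifs <;> simp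
  -- total
  have htot : HasSum (fun n => (if n = 0 then -((1 / 2 : ℂ) • Y) else 0) +
      (∑ p ∈ Finset.HasAntidiagonal.antidiagonal n, h p) + Hf n)
      (-((1 / 2 : ℂ) • Y) + P * Mid * Q + P * ((1 / 2 : ℂ) • X) * Q) := (hI.add hd).add hHf
  have htarget : -((1 / 2 : ℂ) • Y) + P * Mid * Q + P * ((1 / 2 : ℂ) • X) * Q
      = -((1 / 2 : ℂ) • Y) +
        NormedSpace.exp ((-(l / 2)) • Y) *
          (NormedSpace.exp ((-(l / 2)) • X) * Y * NormedSpace.exp ((l / 2) • X) +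
            (1 / 2 : ℂ) • X) *
          NormedSpace.exp ((l / 2) • Y) := by
    rw [hPY, hPX, hQY, hQX, mul_add, add_mul, add_assoc]
  -- the key coefficient identity
  have E : ∀ n : ℕ, (if n = 0 then -((1 / 2 : ℂ) • Y) else 0) +
      (∑ p ∈ Finset.HasAntidiagonal.antidiagonal n, h p) + Hf n = l ^ n • f₁ n := by
    intro n
    exact key_eq X Y l f₁ hf₀ hf n
  constructor
  · refine Summable.of_nonneg_of_le (fun _ => norm_nonneg _) (fun n => ?_)
      ((hIn.add hdn).add hHfn)
    rw [← E n]
    refine le_trans (norm_add_le _ _) ?_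
    gcongr
    refine le_trans (norm_add_le _ _) ?_
    gcongr
    exact norm_sum_le _ _
  · have h2 := htot
    rw [show (fun n => (if n = 0 then -((1 / 2 : ℂ) • Y) else 0) +
      (∑ p ∈ Finset.HasAntidiagonal.antidiagonal n, h p) + Hf n) = (fun n => l ^ n • f₁ n) from funext E,
      htarget] at h2
    exact h2

end FOneAuxLemmas
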